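/- Let Φ = (φ_n)_n and Ψ = (ψ_n)_n be two frames for H, with M_Ψ an upper frame (Bessel) bound for Ψ. Then Ψ is an approximately dual frame of Φ if and only if there exists a bounded operator D on H such that T_Φ U_Ψ = S_Φ^{1/2} D, D D* ≤ M_Ψ · Id_H (as positive operators), and ‖Id_H − S_Φ^{1/2} D‖ < 1. -/

import Mathlib

noncomputable section

open ContinuousLinearMap
open scoped ComplexInnerProductSpace ENNReal

variable {H : Type*} [NormedAddCommGroup H] [InnerProductSpace ℂ H] [CompleteSpace H]

/-- The sequence space `ℓ²(ℕ)`. -/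
abbrev Ltwo : Type := lp (fun _ : ℕ => ℂ) 2

/-- `φ` is a Bessel sequence with Bessel bound `M`:
`∑ₙ |⟨f, φₙ⟩|² ≤ M‖f‖²` for every `f`.  (Mathlib inner products are conjugate-linear in the
first slot, so `⟪φ n, f⟫` corresponds to the paper's `⟨f, φₙ⟩`.) -/
def IsBesselBound (φ : ℕ → H) (M : ℝ) : Prop :=
  ∀ f : H, Summable (fun n => ‖(⟪φ n, f⟫ : ℂ)‖ ^ 2) ∧
    ∑' n, ‖(⟪φ n, f⟫ : ℂ)‖ ^ 2 ≤ M * ‖f‖ ^ 2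

/-- `φ` is a frame with lower frame bound `m` and upper (Bessel) bound `M`. -/
def IsFrameWith (φ : ℕ → H) (m M : ℝ) : Prop :=
  0 < m ∧ IsBesselBound φ M ∧
    ∀ f : H, m * ‖f‖ ^ 2 ≤ ∑' n, ‖(⟪φ n, f⟫ : ℂ)‖ ^ 2

/-- `φ` is a frame for `H`. -/
def IsFrame (φ : ℕ → H) : Prop := ∃ m M, IsFrameWith φ m M

/-- `U` is the analysis operator of `φ` : `U f = (⟨f, φₙ⟩)ₙ`.
The synthesis operator is then `T_φ = adjoint U` and the frame operator is
`S_φ = adjoint U ∘L U`. -/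
def IsAnalysisOp (φ : ℕ → H) (U : H →L[ℂ] Ltwo) : Prop :=
  ∀ (f : H) (n : ℕ), U f n = (⟪φ n, f⟫ : ℂ)
lemma adjoint_norm_eq {E F : Type*} [NormedAddCommGroup E] [InnerProductSpace ℂ E]
    [CompleteSpace E] [NormedAddCommGroup F] [InnerProductSpace ℂ F] [CompleteSpace F]
    (A : E →L[ℂ] F) : ‖ContinuousLinearMap.adjoint A‖ = ‖A‖ :=
  (ContinuousLinearMap.adjoint : (E →L[ℂ] F) ≃ₗᵢ⋆[ℂ] (F →L[ℂ] E)).norm_map A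

lemma analysis_norm_sq (φ : ℕ → H) (U : H →L[ℂ] Ltwo) (hU : IsAnalysisOp φ U) (f : H) :
    ‖U f‖ ^ 2 = ∑' n, ‖(⟪φ n, f⟫ : ℂ)‖ ^ 2 := by
  have hp : (0:ℝ) < (2 : ℝ≥0∞).toReal := by norm_num
  have h := lp.norm_rpow_eq_tsum hp (U f)
  rw [show ((2:ℝ≥0∞)).toReal = (2:ℝ) by norm_num] at h
  simp only [Real.rpow_two] at h
  rw [h]
  congr 1; ext n; rw [hU f n]

set_option maxHeartbeats 1000000 in
/-- Let Φ, Ψ be frames for H with M_Ψ an upper (Bessel) bound for Ψ.  Then Ψ is an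
approximately dual frame of Φ (i.e. `‖Id - T_Φ U_Ψ‖ < 1`) iff there is a bounded operator `D`
with `T_Φ U_Ψ = S_Φ^{1/2} D`, `D D* ≤ M_Ψ · Id` and `‖Id - S_Φ^{1/2} D‖ < 1`.  Here `R` is
the positive square root of the frame operator `S_Φ = adjoint Uφ ∘L Uφ`. -/
theorem statement1 (φ ψ : ℕ → H) (mφ Mφ mψ Mψ : ℝ)
    (hφ : IsFrameWith φ mφ Mφ) (hψ : IsFrameWith ψ mψ Mψ)
    (Uφ Uψ : H →L[ℂ] Ltwo) (hUφ : IsAnalysisOp φ Uφ) (hUψ : IsAnalysisOp ψ Uψ)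
    (R : H →L[ℂ] H) (hRpos : R.IsPositive) (hRsq : R ∘L R = adjoint Uφ ∘L Uφ) :
    ‖(1 : H →L[ℂ] H) - adjoint Uφ ∘L Uψ‖ < 1 ↔
      ∃ D : H →L[ℂ] H, adjoint Uφ ∘L Uψ = R ∘L D ∧
        ((Mψ : ℂ) • (1 : H →L[ℂ] H) - D ∘L adjoint D).IsPositive ∧
        ‖(1 : H →L[ℂ] H) - R ∘L D‖ < 1 := by
  have adj1 : adjoint (1 : H →L[ℂ] H) = 1 := by
    rw [← star_eq_adjoint]; exact star_one _
  constructor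
  · -- forward direction
    intro h
    rcases subsingleton_or_nontrivial H with hs | hn
    · haveI := hs
      refine ⟨0, Subsingleton.elim _ _, ?_, ?_⟩
      · have h0 : ((Mψ : ℂ) • (1 : H →L[ℂ] H) - (0 : H →L[ℂ] H) ∘L adjoint (0 : H →L[ℂ] H))
            = 0 := Subsingleton.elim _ _
        rw [h0]; exact isPositive_zero
      · have h0 : ((1 : H →L[ℂ] H) - R ∘L (0 : H →L[ℂ] H)) = 0 := Subsingleton.elim _ _
        rw [h0, norm_zero]; norm_num
    -- nontrivial case
    have hRsa : adjoint R = R := isSelfAdjoint_iff'.mp hRpos.isSelfAdjoint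
    have hUR : ∀ g : H, ‖Uφ g‖ = ‖R g‖ := by
      intro g
      have h1 : (⟪R g, R g⟫ : ℂ) = ⟪Uφ g, Uφ g⟫ := by
        calc (⟪R g, R g⟫ : ℂ) = ⟪adjoint R g, R g⟫ := by rw [hRsa]
        _ = ⟪g, R (R g)⟫ := adjoint_inner_left R (R g) g
        _ = ⟪g, (R ∘L R) g⟫ := rfl
        _ = ⟪g, adjoint Uφ (Uφ g)⟫ := by rw [hRsq]; rfl
        _ = ⟪Uφ g, Uφ g⟫ := adjoint_inner_right Uφ g (Uφ g)
      have h2 : ‖R g‖ ^ 2 = ‖Uφ g‖ ^ 2 := by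
        rw [← inner_self_eq_norm_sq (𝕜 := ℂ), ← inner_self_eq_norm_sq (𝕜 := ℂ), h1]
      have h3 := congrArg Real.sqrt h2
      rwa [Real.sqrt_sq (norm_nonneg _), Real.sqrt_sq (norm_nonneg _), eq_comm] at h3
    have hMφ : 0 < mφ := hφ.1
    have hSunit : IsUnit (R ∘L R) := by
      refine isUnit_of_forall_le_norm_inner_map (R ∘L R) (c := mφ.toNNReal)
        (Real.toNNReal_pos.mpr hMφ) (fun x => ?_)
      have hx : (⟪(R ∘L R) x, x⟫ : ℂ) = ⟪Uφ x, Uφ x⟫ := by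
        rw [hRsq, ContinuousLinearMap.comp_apply]
        exact adjoint_inner_left Uφ x (Uφ x)
      have hlow : mφ * ‖x‖ ^ 2 ≤ ‖Uφ x‖ ^ 2 := by
        rw [analysis_norm_sq φ Uφ hUφ x]; exact hφ.2.2 x
      rw [hx]
      calc ‖x‖ ^ 2 * mφ.toNNReal = mφ * ‖x‖ ^ 2 := by
            rw [Real.coe_toNNReal _ hMφ.le]; ring
      _ ≤ ‖Uφ x‖ ^ 2 := hlow
      _ = ‖(⟪Uφ x, Uφ x⟫ : ℂ)‖ := by
            rw [inner_self_eq_norm_sq_to_K (𝕜 := ℂ)]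
            simp
    have hRbij : Function.Bijective R := by
      have hS : Function.Bijective (R ∘L R) := isUnit_iff_bijective.mp hSunit
      constructor
      · intro a b hab
        exact hS.1 (show (R ∘L R) a = (R ∘L R) b by simp [comp_apply, hab])
      · intro y
        obtain ⟨x, hx⟩ := hS.2 y
        exact ⟨R x, hx⟩
    have hker : R.ker = ⊥ := LinearMap.ker_eq_bot (f := (R : H →ₗ[ℂ] H)) |>.mpr hRbij.1
    have hrange : R.range = ⊤ := LinearMap.range_eq_top (f := (R : H →ₗ[ℂ] H)) |>.mpr hRbij.2
    set e := ContinuousLinearEquiv.ofBijective R hker hrange with he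
    set Rinv : H →L[ℂ] H := (e.symm : H →L[ℂ] H) with hRinvdef
    have hRRinv : ∀ x, R (Rinv x) = x := fun x => e.apply_symm_apply x
    have hRinvR : ∀ x, Rinv (R x) = x := fun x => e.symm_apply_apply x
    set D : H →L[ℂ] H := Rinv ∘L (adjoint Uφ ∘L Uψ) with hDdef
    have hEq : adjoint Uφ ∘L Uψ = R ∘L D := by
      ext x
      simp only [hDdef, comp_apply, hRRinv]
    have hRinvRc : Rinv ∘L R = 1 := by ext x; simp [comp_apply, hRinvR]
    have hRadjRinv : ∀ x, R (adjoint Rinv x) = x := by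
      intro x
      have h1 : adjoint (Rinv ∘L R) = (1 : H →L[ℂ] H) := by rw [hRinvRc, adj1]
      rw [adjoint_comp, hRsa] at h1
      calc R (adjoint Rinv x) = (R ∘L adjoint Rinv) x := rfl
      _ = x := by rw [h1]; rfl
    have hMψ : 0 < Mψ := by
      obtain ⟨f, hf⟩ := exists_ne (0 : H)
      have h1 := hψ.2.2 f
      have h2 := (hψ.2.1 f).2
      have hf2 : 0 < ‖f‖ ^ 2 := by
        have : 0 < ‖f‖ := norm_pos_iff.mpr hf
        positivity
      nlinarith [hψ.1]
    have hUψbd : ‖Uψ‖ ≤ Real.sqrt Mψ := by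
      refine opNorm_le_bound _ (Real.sqrt_nonneg _) (fun g => ?_)
      have h1 : ‖Uψ g‖ ^ 2 ≤ (Real.sqrt Mψ * ‖g‖) ^ 2 := by
        rw [mul_pow, Real.sq_sqrt hMψ.le, analysis_norm_sq ψ Uψ hUψ g]
        exact (hψ.2.1 g).2
      have h2 := Real.sqrt_le_sqrt h1
      rwa [Real.sqrt_sq (norm_nonneg _), Real.sqrt_sq (by positivity)] at h2
    have hDadj : ∀ x, ‖adjoint D x‖ ≤ Real.sqrt Mψ * ‖x‖ := by
      intro x
      have hcomp : adjoint D = (adjoint Uψ ∘L Uφ) ∘L adjoint Rinv := by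
        rw [hDdef, adjoint_comp, adjoint_comp, adjoint_adjoint]
      have h1 : adjoint D x = adjoint Uψ (Uφ (adjoint Rinv x)) := by rw [hcomp]; rfl
      rw [h1]
      calc ‖adjoint Uψ (Uφ (adjoint Rinv x))‖ ≤ ‖adjoint Uψ‖ * ‖Uφ (adjoint Rinv x)‖ :=
            le_opNorm _ _
      _ = ‖adjoint Uψ‖ * ‖R (adjoint Rinv x)‖ := by rw [hUR]
      _ = ‖adjoint Uψ‖ * ‖x‖ := by rw [hRadjRinv]
      _ = ‖Uψ‖ * ‖x‖ := by rw [adjoint_norm_eq]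
      _ ≤ Real.sqrt Mψ * ‖x‖ := by gcongr
    refine ⟨D, hEq, ⟨?_, ?_⟩, by rw [← hEq]; exact h⟩
    · -- self-adjoint
      have h1 : IsSelfAdjoint ((Mψ : ℂ) • (1 : H →L[ℂ] H)) := by
        rw [IsSelfAdjoint, star_smul, star_one, Complex.star_def, Complex.conj_ofReal]
      have h2 : IsSelfAdjoint (D ∘L adjoint D) := by
        have := IsSelfAdjoint.mul_star_self D
        rwa [star_eq_adjoint, mul_def] at this
      exact (h1.sub h2).isSymmetric
    · intro x
      rw [reApplyInnerSelf_apply]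
      have key : (⟪((Mψ : ℂ) • (1 : H →L[ℂ] H) - D ∘L adjoint D) x, x⟫ : ℂ)
          = ((Mψ * ‖x‖ ^ 2 - ‖adjoint D x‖ ^ 2 : ℝ) : ℂ) := by
        have e1 : (⟪D (adjoint D x), x⟫ : ℂ) = ⟪adjoint D x, adjoint D x⟫ :=
          (adjoint_inner_right D (adjoint D x) x).symm
        simp only [sub_apply, smul_apply, one_apply, inner_sub_left, inner_smul_left,
          comp_apply, Complex.star_def, Complex.conj_ofReal, e1,
          inner_self_eq_norm_sq_to_K (𝕜 := ℂ)]
        push_cast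
        rw [id_eq, inner_self_eq_norm_sq_to_K (𝕜 := ℂ)]
        rfl
      rw [key]
      have h2 : (0:ℝ) ≤ Mψ * ‖x‖ ^ 2 - ‖adjoint D x‖ ^ 2 := by
        have hb := hDadj x
        nlinarith [norm_nonneg (adjoint D x), norm_nonneg x, Real.sq_sqrt hMψ.le,
          Real.sqrt_nonneg Mψ]
      simpa [← Complex.ofReal_pow] using h2
  · rintro ⟨D, hD, -, h⟩
    rwa [hD]
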